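/- Let m > 0 and k ≥ 2 be integers, and let m = C(n_k, k) + C(n_{k-1}, k-1) + Σ_{i=1}^{s} C(a_{k-i}, k-i) be the unique representation with n_k > n_{k-1} ≥ k-2, a_{k-1} > … > a_{k-s} ≥ k-s > 0 and C(n_{k-1}, k-2) > Σ_{i=1}^{s} C(a_{k-i}, k-i). Then there exists a finite simple graph G that contains a clique on n_k vertices, with c_k(G) = m and c_{k+1}(G) ≥ C(n_k, k+1) + C(n_{k-1}, k) + C(a_{k-1}, k), where the term C(a_{k-1}, k) is taken to be 0 if s = 0. -/

import Mathlib

/-- The number of `n`-cliques (sets of `n` pairwise-adjacent vertices) of a finite simple graph. -/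
noncomputable def cliqueCount {V : Type*} [Fintype V] (G : SimpleGraph V) (n : ℕ) : ℕ :=
  Set.ncard {t : Finset V | G.IsNClique n t}

/-- The representation `m = C(n_k, k) + C(n_{k-1}, k-1) + Σ_{i=1}^{s} C(a_{k-i}, k-i)` with
`n_k > n_{k-1} ≥ k-2`, `a_{k-1} > … > a_{k-s} ≥ k-s > 0` and
`C(n_{k-1}, k-2) > Σ_{i=1}^{s} C(a_{k-i}, k-i)`.  Here `a i` stands for `a_{k-1-i}`
(so the trailing sum is `∑ i ∈ Finset.range s, C(a i, k-1-i)`). -/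
def LgbdRep (m k nk nk1 s : ℕ) (a : ℕ → ℕ) : Prop :=
  nk1 < nk ∧ k - 2 ≤ nk1 ∧
  (∀ i, i + 1 < s → a (i + 1) < a i) ∧
  (0 < s → s < k ∧ k - s ≤ a (s - 1)) ∧
  (∑ i ∈ Finset.range s, (a i).choose (k - 1 - i)) < nk1.choose (k - 2) ∧
  m = nk.choose k + nk1.choose (k - 1) + ∑ i ∈ Finset.range s, (a i).choose (k - 1 - i)

namespace ConbdAux

open SimpleGraph Finset Sum

variable (nk nk1 a0 r k : ℕ)

/-- The vertex type: a ground clique `Fin nk`, two cone vertices, and `r` disjoint `K_k`s. -/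
abbrev Vt := Fin nk ⊕ (Fin 2 ⊕ (Fin r × Fin k))

/-- Adjacency relation of the construction. -/
def gAdj : Vt nk r k → Vt nk r k → Prop
  | inl i, inl j => i ≠ j
  | inl i, inr (inl x) => (x = 0 ∧ (i : ℕ) < nk1) ∨ (x = 1 ∧ (i : ℕ) < a0)
  | inr (inl x), inl i => (x = 0 ∧ (i : ℕ) < nk1) ∨ (x = 1 ∧ (i : ℕ) < a0)
  | inr (inr p), inr (inr q) => p.1 = q.1 ∧ p ≠ q
  | _, _ => False

/-- The graph of the construction. -/
def Gr : SimpleGraph (Vt nk r k) where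
  Adj := gAdj nk nk1 a0 r k
  symm := by
    constructor
    rintro (i | x | p) (j | y | q) h <;> simp only [gAdj] at h ⊢ <;>
      first
        | exact h.elim
        | exact h.symm
        | exact h
        | exact ⟨h.1.symm, h.2.symm⟩
  loopless := by
    constructor
    rintro (i | x | p) h <;> simp only [gAdj] at h <;>
      first
        | exact h rfl
        | exact h
        | exact h.2 rfl

/-- The embedding of the ground clique. -/
def inlE : Fin nk ↪ Vt nk r k := ⟨inl, inl_injective⟩

def uV : Vt nk r k := inr (inl 0)

def wV : Vt nk r k := inr (inl 1)

/-- The `c`-th disjoint copy of `K_k`. -/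
def copyF (c : Fin r) : Finset (Vt nk r k) :=
  univ.map ⟨fun i : Fin k => inr (inr (c, i)), fun i j h => by
    simpa using h⟩

lemma card_copyF (c : Fin r) : (copyF nk r k c).card = k := by
  simp [copyF]

lemma uV_notmem_map (s : Finset (Fin nk)) : uV nk r k ∉ s.map (inlE nk r k) := by
  simp [uV, inlE]

lemma wV_notmem_map (s : Finset (Fin nk)) : wV nk r k ∉ s.map (inlE nk r k) := by
  simp [wV, inlE]

lemma uV_ne_wV : uV nk r k ≠ wV nk r k := by
  simp [uV, wV, Fin.ext_iff]

section Cliques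

variable {nk nk1 a0 r k}

lemma isNClique_A {n : ℕ} (s : Finset (Fin nk)) (hs : s.card = n) :
    (Gr nk nk1 a0 r k).IsNClique n (s.map (inlE nk r k)) := by
  constructor
  · rintro v hv w hw hne
    rw [Finset.mem_coe, Finset.mem_map] at hv hw
    obtain ⟨i, -, rfl⟩ := hv
    obtain ⟨j, -, rfl⟩ := hw
    show gAdj nk nk1 a0 r k (inl i) (inl j)
    exact fun hij => hne (congrArg _ hij)
  · rw [card_map, hs]

lemma isNClique_B {n : ℕ} (hn : 1 ≤ n) (s : Finset (Fin nk))
    (hsub : ∀ i ∈ s, (i : ℕ) < nk1) (hs : s.card = n - 1) :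
    (Gr nk nk1 a0 r k).IsNClique n (insert (uV nk r k) (s.map (inlE nk r k))) := by
  constructor
  · rintro v hv w hw hne
    rw [Finset.mem_coe, Finset.mem_insert] at hv hw
    rcases hv with rfl | hv <;> rcases hw with rfl | hw
    · exact absurd rfl hne
    · rw [Finset.mem_map] at hw
      obtain ⟨j, hj, rfl⟩ := hw
      exact Or.inl ⟨rfl, hsub j hj⟩
    · rw [Finset.mem_map] at hv
      obtain ⟨i, hi, rfl⟩ := hv
      exact Or.inl ⟨rfl, hsub i hi⟩
    · rw [Finset.mem_map] at hv hw
      obtain ⟨i, -, rfl⟩ := hv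
      obtain ⟨j, -, rfl⟩ := hw
      show gAdj nk nk1 a0 r k (inl i) (inl j)
      exact fun hij => hne (congrArg _ hij)
  · rw [card_insert_of_notMem (uV_notmem_map nk r k s), card_map, hs]
    omega

lemma isNClique_C {n : ℕ} (hn : 1 ≤ n) (s : Finset (Fin nk))
    (hsub : ∀ i ∈ s, (i : ℕ) < a0) (hs : s.card = n - 1) :
    (Gr nk nk1 a0 r k).IsNClique n (insert (wV nk r k) (s.map (inlE nk r k))) := by
  constructor
  · rintro v hv w hw hne
    rw [Finset.mem_coe, Finset.mem_insert] at hv hw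
    rcases hv with rfl | hv <;> rcases hw with rfl | hw
    · exact absurd rfl hne
    · rw [Finset.mem_map] at hw
      obtain ⟨j, hj, rfl⟩ := hw
      exact Or.inr ⟨rfl, hsub j hj⟩
    · rw [Finset.mem_map] at hv
      obtain ⟨i, hi, rfl⟩ := hv
      exact Or.inr ⟨rfl, hsub i hi⟩
    · rw [Finset.mem_map] at hv hw
      obtain ⟨i, -, rfl⟩ := hv
      obtain ⟨j, -, rfl⟩ := hw
      show gAdj nk nk1 a0 r k (inl i) (inl j)
      exact fun hij => hne (congrArg _ hij)
  · rw [card_insert_of_notMem (wV_notmem_map nk r k s), card_map, hs]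
    omega

lemma isNClique_D (c : Fin r) : (Gr nk nk1 a0 r k).IsNClique k (copyF nk r k c) := by
  constructor
  · rintro v hv w hw hne
    rw [Finset.mem_coe, copyF, Finset.mem_map] at hv hw
    obtain ⟨i, -, rfl⟩ := hv
    obtain ⟨j, -, rfl⟩ := hw
    refine Or.elim (em (i = j)) (fun h => absurd (by rw [h]) hne) fun h => ?_
    exact ⟨rfl, fun hpq => h (by simpa using hpq)⟩
  · exact card_copyF nk r k c

/-- Structure of `k`-cliques in the construction. -/
lemma clique_shape {t : Finset (Vt nk r k)} (hk : 2 ≤ k)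
    (h : (Gr nk nk1 a0 r k).IsNClique k t) :
    (∃ s : Finset (Fin nk), t = s.map (inlE nk r k)) ∨
    (∃ s : Finset (Fin nk), (∀ i ∈ s, (i : ℕ) < nk1) ∧
      t = insert (uV nk r k) (s.map (inlE nk r k))) ∨
    (∃ s : Finset (Fin nk), (∀ i ∈ s, (i : ℕ) < a0) ∧
      t = insert (wV nk r k) (s.map (inlE nk r k))) ∨
    (∃ c : Fin r, t = copyF nk r k c) := by
  by_cases hD : ∃ v ∈ t, ∃ q : Fin r × Fin k, v = inr (inr q)
  · obtain ⟨v, hv, q, rfl⟩ := hD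
    refine Or.inr (Or.inr (Or.inr ⟨q.1, ?_⟩))
    have hsub : t ⊆ copyF nk r k q.1 := by
      intro x hx
      rcases eq_or_ne x (inr (inr q)) with rfl | hne
      · rw [copyF, Finset.mem_map]
        exact ⟨q.2, mem_univ _, rfl⟩
      · have hadj := h.1 hv hx hne.symm
        rcases x with i | y | p
        · exact hadj.elim
        · exact hadj.elim
        · obtain ⟨h1, -⟩ := hadj
          rw [copyF, Finset.mem_map]
          exact ⟨p.2, mem_univ _, by simp [h1]⟩
    exact eq_of_subset_of_card_le hsub (by rw [card_copyF, h.2])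
  · push_neg at hD
    by_cases hu : uV nk r k ∈ t <;> by_cases hw : wV nk r k ∈ t
    · exact absurd (h.1 hu hw (uV_ne_wV nk r k)) (fun hadj => hadj.elim)
    · -- u ∈ t, w ∉ t
      refine Or.inr (Or.inl ?_)
      have key : ∀ x ∈ t, x ≠ uV nk r k → ∃ i : Fin nk, x = inl i ∧ (i : ℕ) < nk1 := by
        intro x hx hne
        have hadj := h.1 hu hx hne.symm
        rcases x with i | y | p
        · rcases hadj with ⟨-, hlt⟩ | ⟨h01, -⟩
          · exact ⟨i, rfl, hlt⟩
          · exact absurd h01 (by decide)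
        · exact hadj.elim
        · exact absurd rfl (hD _ hx p)
      refine ⟨(t.erase (uV nk r k)).preimage (inlE nk r k)
        ((inlE nk r k).injective.injOn), fun i hi => ?_, ?_⟩
      · rw [Finset.mem_preimage] at hi
        obtain ⟨j, hj, hlt⟩ := key _ (Finset.mem_of_mem_erase hi)
          (Finset.ne_of_mem_erase hi)
        have : j = i := inl_injective hj.symm
        exact this ▸ hlt
      · have herase : Finset.map (inlE nk r k) ((t.erase (uV nk r k)).preimage (inlE nk r k)
            ((inlE nk r k).injective.injOn)) = t.erase (uV nk r k) := by
          ext x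
          rw [Finset.mem_map]
          constructor
          · rintro ⟨i, hi, rfl⟩
            exact Finset.mem_preimage.1 hi
          · intro hx
            obtain ⟨i, rfl, -⟩ := key _ (Finset.mem_of_mem_erase hx)
              (Finset.ne_of_mem_erase hx)
            exact ⟨i, Finset.mem_preimage.2 hx, rfl⟩
        rw [herase, Finset.insert_erase hu]
    · -- w ∈ t, u ∉ t
      refine Or.inr (Or.inr (Or.inl ?_))
      have key : ∀ x ∈ t, x ≠ wV nk r k → ∃ i : Fin nk, x = inl i ∧ (i : ℕ) < a0 := by
        intro x hx hne
        have hadj := h.1 hw hx hne.symm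
        rcases x with i | y | p
        · rcases hadj with ⟨h10, -⟩ | ⟨-, hlt⟩
          · exact absurd h10 (by decide)
          · exact ⟨i, rfl, hlt⟩
        · exact hadj.elim
        · exact absurd rfl (hD _ hx p)
      refine ⟨(t.erase (wV nk r k)).preimage (inlE nk r k)
        ((inlE nk r k).injective.injOn), fun i hi => ?_, ?_⟩
      · rw [Finset.mem_preimage] at hi
        obtain ⟨j, hj, hlt⟩ := key _ (Finset.mem_of_mem_erase hi)
          (Finset.ne_of_mem_erase hi)
        have : j = i := inl_injective hj.symm
        exact this ▸ hlt
      · have herase : Finset.map (inlE nk r k) ((t.erase (wV nk r k)).preimage (inlE nk r k)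
            ((inlE nk r k).injective.injOn)) = t.erase (wV nk r k) := by
          ext x
          rw [Finset.mem_map]
          constructor
          · rintro ⟨i, hi, rfl⟩
            exact Finset.mem_preimage.1 hi
          · intro hx
            obtain ⟨i, rfl, -⟩ := key _ (Finset.mem_of_mem_erase hx)
              (Finset.ne_of_mem_erase hx)
            exact ⟨i, Finset.mem_preimage.2 hx, rfl⟩
        rw [herase, Finset.insert_erase hw]
    · -- neither
      refine Or.inl ?_
      have key : ∀ x ∈ t, ∃ i : Fin nk, x = inl i := by
        intro x hx
        rcases x with i | y | p
        · exact ⟨i, rfl⟩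
        · exfalso
          rcases y with ⟨(_ | _ | n), hy⟩
          · exact hu (by simpa [uV] using hx)
          · exact hw (by simpa [wV] using hx)
          · omega
        · exact absurd rfl (hD _ hx p)
      refine ⟨t.preimage (inlE nk r k) ((inlE nk r k).injective.injOn), ?_⟩
      ext x
      rw [Finset.mem_map]
      constructor
      · intro hx
        obtain ⟨i, rfl⟩ := key _ hx
        exact ⟨i, Finset.mem_preimage.2 hx, rfl⟩
      · rintro ⟨i, hi, rfl⟩
        exact Finset.mem_preimage.1 hi

end Cliques

/-- Ground vertices with index `< b`. -/
def finLT (b : ℕ) : Finset (Fin nk) := univ.filter fun i => (i : ℕ) < b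

lemma card_finLT {b : ℕ} (h : b ≤ nk) : (finLT nk b).card = b := by
  have : finLT nk b = (univ : Finset (Fin b)).map (Fin.castLEEmb h) := by
    ext x
    simp only [finLT, Finset.mem_filter, mem_univ, true_and, Finset.mem_map]
    constructor
    · intro hx
      exact ⟨⟨(x : ℕ), hx⟩, rfl⟩
    · rintro ⟨y, rfl⟩
      exact y.2
  rw [this, card_map, card_univ, Fintype.card_fin]

/-- The cliques inside the ground clique. -/
def SA (n : ℕ) : Finset (Finset (Vt nk r k)) :=
  ((univ : Finset (Fin nk)).powersetCard n).image fun s => s.map (inlE nk r k)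

/-- The cliques through `u`. -/
def SB (n : ℕ) : Finset (Finset (Vt nk r k)) :=
  ((finLT nk nk1).powersetCard n).image fun s => insert (uV nk r k) (s.map (inlE nk r k))

/-- The cliques through `w`. -/
def SC (n : ℕ) : Finset (Finset (Vt nk r k)) :=
  ((finLT nk a0).powersetCard n).image fun s => insert (wV nk r k) (s.map (inlE nk r k))

/-- The extra copies of `K_k`. -/
def SD : Finset (Finset (Vt nk r k)) := univ.image (copyF nk r k)

lemma card_SA (n : ℕ) : (SA nk r k n).card = nk.choose n := by
  rw [SA, Finset.card_image_of_injective _ (Finset.map_injective _),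
    card_powersetCard, card_univ, Fintype.card_fin]

lemma insert_map_injective (v : Vt nk r k) (hv : ∀ s : Finset (Fin nk), v ∉ s.map (inlE nk r k)) :
    Function.Injective fun s : Finset (Fin nk) => insert v (s.map (inlE nk r k)) := by
  intro s s' h
  apply Finset.map_injective (inlE nk r k)
  have := congrArg (Finset.erase · v) h
  simpa [Finset.erase_insert (hv s), Finset.erase_insert (hv s')] using this

lemma card_SB {n : ℕ} (h : nk1 ≤ nk) : (SB nk nk1 r k n).card = nk1.choose n := by
  rw [SB, Finset.card_image_of_injective _
    (insert_map_injective nk r k _ (uV_notmem_map nk r k)),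
    card_powersetCard, card_finLT nk h]

lemma card_SC {n : ℕ} (h : a0 ≤ nk) : (SC nk a0 r k n).card = a0.choose n := by
  rw [SC, Finset.card_image_of_injective _
    (insert_map_injective nk r k _ (wV_notmem_map nk r k)),
    card_powersetCard, card_finLT nk h]

lemma card_SD (hk : 0 < k) : (SD nk r k).card = r := by
  rw [SD, Finset.card_image_of_injective, card_univ, Fintype.card_fin]
  intro c c' h
  have : inr (inr (c, (⟨0, hk⟩ : Fin k))) ∈ copyF nk r k c' := by
    rw [← h, copyF, Finset.mem_map]
    exact ⟨⟨0, hk⟩, mem_univ _, rfl⟩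
  rw [copyF, Finset.mem_map] at this
  obtain ⟨i, -, hi⟩ := this
  have h2 : c' = c ∧ i = ⟨0, hk⟩ := Prod.mk.inj (Sum.inr.inj (Sum.inr.inj hi))
  exact h2.1.symm

section Shapes

variable {nk nk1 a0 r k}

lemma shape_SA {n : ℕ} {t : Finset (Vt nk r k)} (h : t ∈ SA nk r k n) :
    ∀ v ∈ t, ∃ i : Fin nk, v = inl i := by
  rw [SA, Finset.mem_image] at h
  obtain ⟨s, -, rfl⟩ := h
  intro v hv
  rw [Finset.mem_map] at hv
  obtain ⟨i, -, rfl⟩ := hv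
  exact ⟨i, rfl⟩

lemma shape_SB {n : ℕ} {t : Finset (Vt nk r k)} (h : t ∈ SB nk nk1 r k n) :
    uV nk r k ∈ t ∧ ∀ v ∈ t, v = uV nk r k ∨ ∃ i : Fin nk, v = inl i := by
  rw [SB, Finset.mem_image] at h
  obtain ⟨s, -, rfl⟩ := h
  refine ⟨Finset.mem_insert_self _ _, fun v hv => ?_⟩
  rcases Finset.mem_insert.1 hv with rfl | hv
  · exact Or.inl rfl
  · rw [Finset.mem_map] at hv
    obtain ⟨i, -, rfl⟩ := hv
    exact Or.inr ⟨i, rfl⟩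

lemma shape_SC {n : ℕ} {t : Finset (Vt nk r k)} (h : t ∈ SC nk a0 r k n) :
    wV nk r k ∈ t ∧ ∀ v ∈ t, v = wV nk r k ∨ ∃ i : Fin nk, v = inl i := by
  rw [SC, Finset.mem_image] at h
  obtain ⟨s, -, rfl⟩ := h
  refine ⟨Finset.mem_insert_self _ _, fun v hv => ?_⟩
  rcases Finset.mem_insert.1 hv with rfl | hv
  · exact Or.inl rfl
  · rw [Finset.mem_map] at hv
    obtain ⟨i, -, rfl⟩ := hv
    exact Or.inr ⟨i, rfl⟩

lemma shape_SD {t : Finset (Vt nk r k)} (hk : 0 < k) (h : t ∈ SD nk r k) :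
    t.Nonempty ∧ ∀ v ∈ t, ∃ p : Fin r × Fin k, v = inr (inr p) := by
  rw [SD, Finset.mem_image] at h
  obtain ⟨c, -, rfl⟩ := h
  constructor
  · refine ⟨inr (inr (c, ⟨0, hk⟩)), ?_⟩
    rw [copyF, Finset.mem_map]
    exact ⟨⟨0, hk⟩, mem_univ _, rfl⟩
  · intro v hv
    rw [copyF, Finset.mem_map] at hv
    obtain ⟨i, -, rfl⟩ := hv
    exact ⟨(c, i), rfl⟩

lemma disj_AB {n m : ℕ} : Disjoint (SA nk r k n) (SB nk nk1 r k m) := by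
  rw [Finset.disjoint_left]
  intro t hA hB
  obtain ⟨i, hi⟩ := shape_SA hA _ (shape_SB hB).1
  exact absurd hi (by simp [uV])

lemma disj_AC {n m : ℕ} : Disjoint (SA nk r k n) (SC nk a0 r k m) := by
  rw [Finset.disjoint_left]
  intro t hA hC
  obtain ⟨i, hi⟩ := shape_SA hA _ (shape_SC hC).1
  exact absurd hi (by simp [wV])

lemma disj_BC {n m : ℕ} : Disjoint (SB nk nk1 r k n) (SC nk a0 r k m) := by
  rw [Finset.disjoint_left]
  intro t hB hC
  rcases (shape_SC hC).2 _ (shape_SB hB).1 with h | ⟨i, hi⟩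
  · exact uV_ne_wV nk r k h
  · exact absurd hi (by simp [uV])

lemma disj_AD {n : ℕ} (hk : 0 < k) : Disjoint (SA nk r k n) (SD nk r k) := by
  rw [Finset.disjoint_left]
  intro t hA hD
  obtain ⟨⟨v, hv⟩, hall⟩ := shape_SD hk hD
  obtain ⟨i, hi⟩ := shape_SA hA _ hv
  obtain ⟨p, hp⟩ := hall _ hv
  rw [hi] at hp
  exact absurd hp (by simp)

lemma disj_BD {n : ℕ} (hk : 0 < k) : Disjoint (SB nk nk1 r k n) (SD nk r k) := by
  rw [Finset.disjoint_left]
  intro t hB hD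
  obtain ⟨p, hp⟩ := (shape_SD hk hD).2 _ (shape_SB hB).1
  exact absurd hp (by simp [uV])

lemma disj_CD {n : ℕ} (hk : 0 < k) : Disjoint (SC nk a0 r k n) (SD nk r k) := by
  rw [Finset.disjoint_left]
  intro t hC hD
  obtain ⟨p, hp⟩ := (shape_SD hk hD).2 _ (shape_SC hC).1
  exact absurd hp (by simp [wV])

end Shapes

section Counting

variable {nk nk1 a0 r k}

/-- The set of `k`-cliques of the construction. -/
lemma cliqueSet_k (hk : 2 ≤ k) :
    (Gr nk nk1 a0 r k).cliqueSet k =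
      ↑(SA nk r k k ∪ SB nk nk1 r k (k - 1) ∪ SC nk a0 r k (k - 1) ∪ SD nk r k) := by
  ext t
  simp only [mem_cliqueSet_iff, Finset.coe_union, Set.mem_union, Finset.mem_coe]
  constructor
  · intro h
    rcases clique_shape hk h with ⟨s, rfl⟩ | ⟨s, hsub, rfl⟩ | ⟨s, hsub, rfl⟩ | ⟨c, rfl⟩
    · refine Or.inl (Or.inl (Or.inl ?_))
      rw [SA, Finset.mem_image]
      refine ⟨s, ?_, rfl⟩
      rw [mem_powersetCard]
      refine ⟨Finset.subset_univ _, ?_⟩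
      have := h.2
      rwa [card_map] at this
    · refine Or.inl (Or.inl (Or.inr ?_))
      rw [SB, Finset.mem_image]
      refine ⟨s, ?_, rfl⟩
      rw [mem_powersetCard]
      have hc := h.2
      rw [card_insert_of_notMem (uV_notmem_map nk r k s), card_map] at hc
      exact ⟨fun i hi => by simpa [finLT] using hsub i hi, by omega⟩
    · refine Or.inl (Or.inr ?_)
      rw [SC, Finset.mem_image]
      refine ⟨s, ?_, rfl⟩
      rw [mem_powersetCard]
      have hc := h.2
      rw [card_insert_of_notMem (wV_notmem_map nk r k s), card_map] at hc
      exact ⟨fun i hi => by simpa [finLT] using hsub i hi, by omega⟩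
    · refine Or.inr ?_
      rw [SD, Finset.mem_image]
      exact ⟨c, mem_univ _, rfl⟩
  · rintro ((((h | h) | h) | h))
    · rw [SA, Finset.mem_image] at h
      obtain ⟨s, hs, rfl⟩ := h
      exact isNClique_A s (mem_powersetCard.1 hs).2
    · rw [SB, Finset.mem_image] at h
      obtain ⟨s, hs, rfl⟩ := h
      rw [mem_powersetCard] at hs
      exact isNClique_B (by omega) s
        (fun i hi => by simpa [finLT] using hs.1 hi) (by omega)
    · rw [SC, Finset.mem_image] at h
      obtain ⟨s, hs, rfl⟩ := h
      rw [mem_powersetCard] at hs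
      exact isNClique_C (by omega) s
        (fun i hi => by simpa [finLT] using hs.1 hi) (by omega)
    · rw [SD, Finset.mem_image] at h
      obtain ⟨c, -, rfl⟩ := h
      exact isNClique_D c

lemma count_k (hk : 2 ≤ k) (h1 : nk1 ≤ nk) (h2 : a0 ≤ nk) :
    cliqueCount (Gr nk nk1 a0 r k) k =
      nk.choose k + nk1.choose (k - 1) + a0.choose (k - 1) + r := by
  have hk0 : 0 < k := by omega
  rw [show cliqueCount (Gr nk nk1 a0 r k) k = ((Gr nk nk1 a0 r k).cliqueSet k).ncard from rfl,
    cliqueSet_k hk, Set.ncard_coe_finset]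
  rw [Finset.card_union_of_disjoint (by
      refine Finset.disjoint_union_left.2 ⟨Finset.disjoint_union_left.2 ⟨?_, ?_⟩, ?_⟩
      exacts [disj_AD hk0, disj_BD hk0, disj_CD hk0]),
    Finset.card_union_of_disjoint (by
      refine Finset.disjoint_union_left.2 ⟨?_, ?_⟩
      exacts [disj_AC, disj_BC]),
    Finset.card_union_of_disjoint disj_AB,
    card_SA, card_SB _ _ _ _ h1, card_SC _ _ _ _ h2, card_SD _ _ _ hk0]

lemma count_k1 (hk : 2 ≤ k) (h1 : nk1 ≤ nk) (h2 : a0 ≤ nk) :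
    nk.choose (k + 1) + nk1.choose k + a0.choose k ≤
      cliqueCount (Gr nk nk1 a0 r k) (k + 1) := by
  have hsub : ↑(SA nk r k (k + 1) ∪ SB nk nk1 r k k ∪ SC nk a0 r k k) ⊆
      {t : Finset (Vt nk r k) | (Gr nk nk1 a0 r k).IsNClique (k + 1) t} := by
    intro t ht
    simp only [Finset.coe_union, Set.mem_union, Finset.mem_coe] at ht
    simp only [Set.mem_setOf_eq]
    rcases ht with (h | h) | h
    · rw [SA, Finset.mem_image] at h
      obtain ⟨s, hs, rfl⟩ := h
      exact isNClique_A s (mem_powersetCard.1 hs).2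
    · rw [SB, Finset.mem_image] at h
      obtain ⟨s, hs, rfl⟩ := h
      rw [mem_powersetCard] at hs
      exact isNClique_B (by omega) s
        (fun i hi => by simpa [finLT] using hs.1 hi) (by omega)
    · rw [SC, Finset.mem_image] at h
      obtain ⟨s, hs, rfl⟩ := h
      rw [mem_powersetCard] at hs
      exact isNClique_C (by omega) s
        (fun i hi => by simpa [finLT] using hs.1 hi) (by omega)
  have := Set.ncard_le_ncard hsub (Set.toFinite _)
  rw [Set.ncard_coe_finset] at this
  refine le_trans (le_of_eq ?_) this
  rw [Finset.card_union_of_disjoint (Finset.disjoint_union_left.2 ⟨disj_AC, disj_BC⟩),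
    Finset.card_union_of_disjoint disj_AB,
    card_SA, card_SB _ _ _ _ h1, card_SC _ _ _ _ h2]

end Counting

end ConbdAux

/-- Lemma (constructive lower bound): for `m > 0` and `k ≥ 2` with representation
`m = C(n_k, k) + C(n_{k-1}, k-1) + Σ_{i=1}^{s} C(a_{k-i}, k-i)` as in `LgbdRep`, there is a
finite simple graph `G` containing a clique on `n_k` vertices with `c_k(G) = m` and
`c_{k+1}(G) ≥ C(n_k, k+1) + C(n_{k-1}, k) + C(a_{k-1}, k)` (the last term `0` if `s = 0`). -/
theorem conbd_lower_bound (m k nk nk1 s : ℕ) (a : ℕ → ℕ) (hm : 0 < m) (hk : 2 ≤ k)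
    (hrep : LgbdRep m k nk nk1 s a) :
    ∃ (nv : ℕ) (G : SimpleGraph (Fin nv)),
      (∃ t : Finset (Fin nv), G.IsNClique nk t) ∧ cliqueCount G k = m ∧
      nk.choose (k + 1) + nk1.choose k + (if 0 < s then (a 0).choose k else 0) ≤
        cliqueCount G (k + 1) := by
  classical
  obtain ⟨h1, h2, h3, h4, h5, h6⟩ := hrep
  set a0 : ℕ := if 0 < s then a 0 else 0 with ha0
  set r : ℕ := ∑ i ∈ Finset.Ico 1 s, (a i).choose (k - 1 - i) with hr
  -- the first term of the trailing sum
  have hsplit : (∑ i ∈ Finset.range s, (a i).choose (k - 1 - i)) = a0.choose (k - 1) + r := by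
    rcases Nat.eq_zero_or_pos s with rfl | hs
    · simp [ha0, hr, Nat.choose_eq_zero_of_lt (show 0 < k - 1 by omega)]
    · rw [Finset.range_eq_Ico, Finset.sum_eq_sum_Ico_succ_bot hs]
      simp [ha0, hs, hr]
  -- a0 ≤ nk1
  have ha0le : a0 ≤ nk1 := by
    rcases Nat.eq_zero_or_pos s with rfl | hs
    · simp [ha0]
    · rw [ha0, if_pos hs]
      by_contra hlt
      push_neg at hlt
      have hterm : (a 0).choose (k - 1) ≤ ∑ i ∈ Finset.range s, (a i).choose (k - 1 - i) := by
        have := Finset.single_le_sum (f := fun i => (a i).choose (k - 1 - i))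
          (fun i _ => Nat.zero_le _) (Finset.mem_range.2 hs)
        simpa using this
      have hmono : (nk1 + 1).choose (k - 1) ≤ (a 0).choose (k - 1) :=
        Nat.choose_le_choose _ hlt
      have hpascal : (nk1 + 1).choose (k - 1) = nk1.choose (k - 2) + nk1.choose (k - 1) := by
        have hk1 : k - 1 = (k - 2) + 1 := by omega
        rw [hk1, Nat.choose_succ_succ]
      omega
  have ha0nk : a0 ≤ nk := le_trans ha0le (le_of_lt h1)
  have hnk1 : nk1 ≤ nk := le_of_lt h1
  -- the construction
  set V := ConbdAux.Vt nk r k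
  let e : V ≃ Fin (Fintype.card V) := Fintype.equivFin V
  refine ⟨Fintype.card V, (ConbdAux.Gr nk nk1 a0 r k).map e.toEmbedding, ?_, ?_, ?_⟩
  · exact ⟨((Finset.univ : Finset (Fin nk)).map (ConbdAux.inlE nk r k)).map e.toEmbedding,
      (ConbdAux.isNClique_A _ (by simp)).map⟩
  · have hmap : cliqueCount ((ConbdAux.Gr nk nk1 a0 r k).map e.toEmbedding) k =
        cliqueCount (ConbdAux.Gr nk nk1 a0 r k) k := by
      show (((ConbdAux.Gr nk nk1 a0 r k).map e.toEmbedding).cliqueSet k).ncard =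
        ((ConbdAux.Gr nk nk1 a0 r k).cliqueSet k).ncard
      refine (congrArg Set.ncard (SimpleGraph.cliqueSet_map_of_equiv _ e _)).trans ?_
      exact Set.ncard_image_of_injective _ (Finset.map_injective _)
    rw [hmap, ConbdAux.count_k hk hnk1 ha0nk, h6, hsplit]
    ring
  · have hmap : cliqueCount ((ConbdAux.Gr nk nk1 a0 r k).map e.toEmbedding) (k + 1) =
        cliqueCount (ConbdAux.Gr nk nk1 a0 r k) (k + 1) := by
      show (((ConbdAux.Gr nk nk1 a0 r k).map e.toEmbedding).cliqueSet (k + 1)).ncard =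
        ((ConbdAux.Gr nk nk1 a0 r k).cliqueSet (k + 1)).ncard
      refine (congrArg Set.ncard (SimpleGraph.cliqueSet_map_of_equiv _ e _)).trans ?_
      exact Set.ncard_image_of_injective _ (Finset.map_injective _)
    have hif : (if 0 < s then (a 0).choose k else 0) = a0.choose k := by
      rcases Nat.eq_zero_or_pos s with rfl | hs
      · simp [ha0, Nat.choose_eq_zero_of_lt (show 0 < k by omega)]
      · simp [ha0, hs]
    rw [hmap, hif]
    exact ConbdAux.count_k1 hk hnk1 ha0nk
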